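/- arXiv:2001.02887 — 2 statements merged into one kernel-verified Lean document; each statement's English description precedes it below -/
import Mathlib

section
/- Let Ω ⊂ ℝ^N be measurable with finite measure and let u ∈ L^m(Ω) for some m ≥ 1. Define μ(h) = meas({|u| ≥ h}) for h > 0. Suppose there exist constants C > 0, γ > 1 and m ≥ 1 such that μ(l) ≤ C·(l − h)^{−m}·μ(h)^γ for all l > h > 0. Then u ∈ L^∞(Ω); more precisely there exists d > 0 with μ(d) = 0. -/
open MeasureTheory

/-- Stampacchia iteration lemma: superlinear decay of the level-set
function with exponent γ > 1 forces it to vanish at a finite level. -/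
theorem stampacchia_vanishing (N : ℕ) (Ω : Set (EuclideanSpace ℝ (Fin N)))
    (hΩ : MeasurableSet Ω) (hfin : volume Ω < ⊤)
    (u : EuclideanSpace ℝ (Fin N) → ℝ)
    (m γ C : ℝ) (hm : 1 ≤ m) (hγ : 1 < γ) (hC : 0 < C)
    (hum : IntegrableOn (fun x => |u x| ^ m) Ω volume)
    (hdecay : ∀ h l : ℝ, 0 < h → h < l →
      (volume {x ∈ Ω | l ≤ |u x|}).toReal ≤
        C * (l - h) ^ (-m) * (volume {x ∈ Ω | h ≤ |u x|}).toReal ^ γ) :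
    ∃ d > (0 : ℝ), volume {x ∈ Ω | d ≤ |u x|} = 0 := by
  have hγ1 : 0 < γ - 1 := by linarith
  have hm0 : 0 < m := by linarith
  set s : ℝ := -(m / (γ - 1)) with hs
  have hsneg : s < 0 := by
    have : 0 < m / (γ - 1) := div_pos hm0 hγ1
    simp only [hs]; linarith
  have hsγ : s * γ = s - m := by
    have e : s * (γ - 1) = -m := by rw [hs, neg_mul, div_mul_cancel₀ _ hγ1.ne']
    linear_combination e
  set M : ℝ := (volume Ω).toReal with hM
  have hfin' : ∀ h : ℝ, volume {x ∈ Ω | h ≤ |u x|} ≠ ⊤ :=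
    fun h => ((measure_mono (Set.sep_subset _ _)).trans_lt hfin).ne
  set μ : ℝ → ℝ := fun h => (volume {x ∈ Ω | h ≤ |u x|}).toReal with hμdef
  have hμ0 : ∀ h, 0 ≤ μ h := fun h => ENNReal.toReal_nonneg
  have hμM : ∀ h, μ h ≤ M := fun h =>
    ENNReal.toReal_mono hfin.ne (measure_mono (Set.sep_subset _ _))
  have hμanti : ∀ a b : ℝ, a ≤ b → μ b ≤ μ a := fun a b hab =>
    ENNReal.toReal_mono (hfin' a) (measure_mono (fun x hx => ⟨hx.1, hab.trans hx.2⟩))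
  set h₀ : ℝ := max 1 (C * M ^ (γ - 1) * 2 ^ m * 2 ^ (-s)) with hh₀
  have h₀1 : (1 : ℝ) ≤ h₀ := le_max_left _ _
  have h₀pos : (0 : ℝ) < h₀ := lt_of_lt_of_le one_pos h₀1
  have hkey0 : C * M ^ (γ - 1) * 2 ^ m * 2 ^ (-s) ≤ h₀ ^ m := by
    calc C * M ^ (γ - 1) * 2 ^ m * 2 ^ (-s) ≤ h₀ := le_max_right _ _
      _ = h₀ ^ (1 : ℝ) := (Real.rpow_one h₀).symm
      _ ≤ h₀ ^ m := Real.rpow_le_rpow_of_exponent_le h₀1 hm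
  -- trivial case: μ h₀ = 0
  rcases eq_or_lt_of_le (hμ0 h₀) with hA0 | hA
  · refine ⟨h₀, h₀pos, ?_⟩
    rcases (ENNReal.toReal_eq_zero_iff _).mp hA0.symm with h | h
    · exact h
    · exact absurd h (hfin' _)
  set A : ℝ := μ h₀ with hAdef
  have hkey1 : C * A ^ (γ - 1) * 2 ^ m * 2 ^ (-s) ≤ h₀ ^ m := by
    refine le_trans ?_ hkey0
    have hAM : A ^ (γ - 1) ≤ M ^ (γ - 1) :=
      Real.rpow_le_rpow (hμ0 _) (hμM _) (by linarith)
    have h2m : (0 : ℝ) < 2 ^ m := Real.rpow_pos_of_pos two_pos m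
    have h2s : (0 : ℝ) < 2 ^ (-s) := Real.rpow_pos_of_pos two_pos (-s)
    nlinarith [mul_pos (mul_pos hC h2m) h2s]
  have h2s : (0 : ℝ) < (2 : ℝ) ^ s := Real.rpow_pos_of_pos two_pos s
  have hh0m : (0 : ℝ) < h₀ ^ m := Real.rpow_pos_of_pos h₀pos m
  have hkey : C * h₀ ^ (-m) * A ^ (γ - 1) * 2 ^ m ≤ 2 ^ s := by
    rw [Real.rpow_neg h₀pos.le, show C * (h₀ ^ m)⁻¹ * A ^ (γ - 1) * 2 ^ m
        = (C * A ^ (γ - 1) * 2 ^ m) / h₀ ^ m by ring, div_le_iff₀ hh0m]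
    rw [Real.rpow_neg (by norm_num : (0:ℝ) ≤ 2), ← one_div,
        show C * A ^ (γ - 1) * 2 ^ m * (1 / (2:ℝ) ^ s) = (C * A ^ (γ - 1) * 2 ^ m) / 2 ^ s
          by ring, div_le_iff₀ h2s] at hkey1
    linarith
  -- the iteration levels
  set k : ℕ → ℝ := fun n => 2 * h₀ - h₀ * (2 : ℝ) ^ (-(n : ℝ)) with hk
  have hk0 : k 0 = h₀ := by simp [hk]; ring
  have hkge : ∀ n, h₀ ≤ k n := by
    intro n
    have h1 : (2 : ℝ) ^ (-(n : ℝ)) ≤ 1 :=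
      Real.rpow_le_one_of_one_le_of_nonpos one_le_two (neg_nonpos.mpr (Nat.cast_nonneg n))
    have h2 : (0 : ℝ) < (2 : ℝ) ^ (-(n : ℝ)) := Real.rpow_pos_of_pos two_pos _
    simp only [hk]; nlinarith
  have hkle : ∀ n, k n ≤ 2 * h₀ := by
    intro n
    have h2 : (0 : ℝ) < (2 : ℝ) ^ (-(n : ℝ)) := Real.rpow_pos_of_pos two_pos _
    simp only [hk]; nlinarith
  have hkstep : ∀ n : ℕ, k (n + 1) - k n = h₀ * (2 : ℝ) ^ (-((n : ℝ) + 1)) := by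
    intro n
    have e : (2 : ℝ) ^ (-(n : ℝ)) = (2 : ℝ) ^ (-((n : ℝ) + 1)) * 2 := by
      have e' := Real.rpow_add two_pos (-((n : ℝ) + 1)) 1
      rw [Real.rpow_one] at e'
      rw [show -(n : ℝ) = -((n : ℝ) + 1) + 1 by ring, e']
    simp only [hk]
    push_cast
    rw [show -((n : ℝ) + 1) = -(n : ℝ) - 1 by ring] at e ⊢
    nlinarith
  have hklt : ∀ n : ℕ, k n < k (n + 1) := by
    intro n
    have h2 : (0 : ℝ) < (2 : ℝ) ^ (-((n : ℝ) + 1)) := Real.rpow_pos_of_pos two_pos _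
    nlinarith [hkstep n]
  -- main induction
  have main : ∀ n : ℕ, μ (k n) ≤ A * (2 : ℝ) ^ (s * (n : ℝ)) := by
    intro n
    induction n with
    | zero => simp [hk0, hAdef]
    | succ n ih =>
      have h1 := hdecay (k n) (k (n + 1)) (lt_of_lt_of_le h₀pos (hkge n)) (hklt n)
      rw [hkstep n] at h1
      have h3 : μ (k (n + 1)) ≤
          C * (h₀ * (2:ℝ) ^ (-((n : ℝ) + 1))) ^ (-m) * (A * (2:ℝ) ^ (s * (n : ℝ))) ^ γ := by
        refine h1.trans ?_
        have h2 : μ (k n) ^ γ ≤ (A * (2:ℝ) ^ (s * (n : ℝ))) ^ γ :=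
          Real.rpow_le_rpow (hμ0 _) ih (by linarith)
        have hpos : (0:ℝ) ≤ C * (h₀ * (2:ℝ) ^ (-((n : ℝ) + 1))) ^ (-m) := by positivity
        exact mul_le_mul_of_nonneg_left h2 hpos
      refine h3.trans ?_
      have eA : A ^ γ = A ^ (γ - 1) * A := by
        rw [show γ = (γ - 1) + 1 by ring]
        rw [Real.rpow_add hA, Real.rpow_one]
        ring_nf
      have e2 : (2:ℝ) ^ (((n : ℝ) + 1) * m) * (2:ℝ) ^ (s * (n : ℝ) * γ)
          = (2:ℝ) ^ m * (2:ℝ) ^ (s * (n : ℝ)) := by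
        rw [← Real.rpow_add two_pos, ← Real.rpow_add two_pos]
        congr 1
        linear_combination (n : ℝ) * hsγ
      have hTpos : (0:ℝ) < (2:ℝ) ^ (s * (n : ℝ)) := Real.rpow_pos_of_pos two_pos _
      calc C * (h₀ * (2:ℝ) ^ (-((n : ℝ) + 1))) ^ (-m) * (A * (2:ℝ) ^ (s * (n : ℝ))) ^ γ
          = (C * h₀ ^ (-m) * A ^ (γ - 1) * 2 ^ m) * (A * (2:ℝ) ^ (s * (n : ℝ))) := by
            rw [Real.mul_rpow h₀pos.le (by positivity),
                Real.mul_rpow hA.le (by positivity),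
                ← Real.rpow_mul (by norm_num : (0:ℝ) ≤ 2),
                ← Real.rpow_mul (by norm_num : (0:ℝ) ≤ 2), eA,
                show -((n : ℝ) + 1) * -m = ((n : ℝ) + 1) * m by ring]
            linear_combination (C * h₀ ^ (-m) * (A ^ (γ - 1) * A)) * e2
        _ ≤ (2:ℝ) ^ s * (A * (2:ℝ) ^ (s * (n : ℝ))) :=
            mul_le_mul_of_nonneg_right hkey (by positivity)
        _ = A * (2:ℝ) ^ (s * ((n : ℕ) + 1 : ℕ) : ℝ) := by
            push_cast
            rw [show s * ((n : ℝ) + 1) = s * (n : ℝ) + s by ring,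
                Real.rpow_add two_pos]
            ring
  -- pass to the limit
  have hr1 : (2:ℝ) ^ s < 1 := Real.rpow_lt_one_of_one_lt_of_neg one_lt_two hsneg
  have hlim : ∀ n : ℕ, μ (2 * h₀) ≤ A * ((2:ℝ) ^ s) ^ n := by
    intro n
    refine (hμanti (k n) (2 * h₀) (hkle n)).trans ?_
    have : (2:ℝ) ^ (s * (n : ℝ)) = ((2:ℝ) ^ s) ^ n := by
      rw [Real.rpow_mul (by norm_num : (0:ℝ) ≤ 2), Real.rpow_natCast]
    rw [← this]
    exact main n
  have hμ2h : μ (2 * h₀) = 0 := by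
    by_contra hne
    have hpos : 0 < μ (2 * h₀) := (hμ0 _).lt_of_ne (Ne.symm hne)
    obtain ⟨n, hn⟩ := exists_pow_lt_of_lt_one (div_pos hpos hA) hr1
    have h1 : A * ((2:ℝ) ^ s) ^ n < μ (2 * h₀) := by
      calc A * ((2:ℝ) ^ s) ^ n < A * (μ (2 * h₀) / A) :=
            mul_lt_mul_of_pos_left hn hA
        _ = μ (2 * h₀) := by field_simp
    linarith [hlim n]
  refine ⟨2 * h₀, by linarith, ?_⟩
  rcases (ENNReal.toReal_eq_zero_iff _).mp hμ2h with h | h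
  · exact h
  · exact absurd h (hfin' _)
end

section
/- Let Ω ⊂ ℝ^N be measurable with finite measure, u ∈ L^m(Ω) with m > 1, and μ(h) = meas({|u| ≥ h}). Suppose μ(l) ≤ C·(l−h)^{−m}·μ(h)^γ for all l > h > 0, with C > 0 and γ ∈ (0,1). Then u ∈ L^{m₁}(Ω) where m₁ = 2m/(2 − γ) > m. -/
open MeasureTheory Set

lemma measurable_rpow_const' (s : ℝ) : Measurable fun x : ℝ => x ^ s := by
  measurability

/-- Gain of integrability: if the level sets satisfy the decay inequality
with γ ∈ (0,1), then u ∈ L^{m₁} with m₁ = 2m/(2−γ) > m. -/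
theorem stampacchia_gain (N : ℕ) (Ω : Set (EuclideanSpace ℝ (Fin N)))
    (hΩ : MeasurableSet Ω) (hfin : volume Ω < ⊤)
    (u : EuclideanSpace ℝ (Fin N) → ℝ) (hu : AEMeasurable u (volume.restrict Ω))
    (m γ C : ℝ) (hm : 1 < m) (hγ0 : 0 < γ) (hγ1 : γ < 1) (hC : 0 < C)
    (hum : IntegrableOn (fun x => |u x| ^ m) Ω volume)
    (hdecay : ∀ h l : ℝ, 0 < h → h < l →
      (volume {x ∈ Ω | l ≤ |u x|}).toReal ≤
        C * (l - h) ^ (-m) * (volume {x ∈ Ω | h ≤ |u x|}).toReal ^ γ) :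
    2 * m / (2 - γ) > m ∧
      IntegrableOn (fun x => |u x| ^ (2 * m / (2 - γ))) Ω volume := by
  have hm0 : (0:ℝ) < m := lt_trans one_pos hm
  have h2γ : (0:ℝ) < 2 - γ := by linarith
  set p := 2 * m / (2 - γ) with hpdef
  have hpm : m < p := by
    rw [hpdef, lt_div_iff₀ h2γ]; nlinarith
  have hp1 : (1:ℝ) < p := lt_trans hm hpm
  have hp0 : (0:ℝ) < p := lt_trans one_pos hp1
  set q := m * (1 + γ) with hqdef
  have hpq : p < q := by
    rw [hpdef, div_lt_iff₀ h2γ, hqdef]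
    nlinarith [mul_pos hm0 (mul_pos hγ0 (by linarith : (0:ℝ) < 1 - γ))]
  refine ⟨hpm, ?_⟩
  set ν := volume.restrict Ω with hν
  set V := (volume Ω).toReal with hV
  have hVnn : 0 ≤ V := ENNReal.toReal_nonneg
  have hsub : ∀ t : ℝ, {x ∈ Ω | t ≤ |u x|} ⊆ Ω := fun t x hx => hx.1
  have hlt : ∀ t : ℝ, volume {x ∈ Ω | t ≤ |u x|} ≠ ⊤ :=
    fun t => ((measure_mono (hsub t)).trans_lt hfin).ne
  have hrest : ∀ t : ℝ, ν {a | t ≤ |u a|} = volume {x ∈ Ω | t ≤ |u x|} := by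
    intro t
    rw [hν, Measure.restrict_apply' hΩ]
    congr 1
    ext x
    simp only [mem_inter_iff, mem_setOf_eq]
    tauto
  -- pointwise decay bound for t ≥ 1
  set K := C * 2 ^ m * (C * 4 ^ m * V ^ γ) ^ γ with hK
  have hKnn : 0 ≤ K := by
    apply mul_nonneg (mul_nonneg hC.le (Real.rpow_nonneg (by norm_num) m))
    exact Real.rpow_nonneg (by positivity) γ
  have hkey : ∀ t : ℝ, 1 ≤ t →
      (volume {x ∈ Ω | t ≤ |u x|}).toReal ≤ K * t ^ (-q) := by
    intro t ht
    have ht0 : (0:ℝ) < t := lt_of_lt_of_le one_pos ht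
    have h2 : (volume {x ∈ Ω | t/2 ≤ |u x|}).toReal ≤ C * 4 ^ m * V ^ γ * t ^ (-m) := by
      have hd := hdecay (t/4) (t/2) (by linarith) (by linarith)
      have hμV : (volume {x ∈ Ω | t/4 ≤ |u x|}).toReal ≤ V := by
        rw [hV]
        exact ENNReal.toReal_mono hfin.ne (measure_mono (hsub _))
      have hpow : (volume {x ∈ Ω | t/4 ≤ |u x|}).toReal ^ γ ≤ V ^ γ :=
        Real.rpow_le_rpow ENNReal.toReal_nonneg hμV hγ0.le
      have heq : t/2 - t/4 = t/4 := by ring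
      have h4 : (t/4) ^ (-m) = 4 ^ m * t ^ (-m) := by
        rw [Real.div_rpow ht0.le (by norm_num), Real.rpow_neg (by norm_num : (0:ℝ) ≤ 4),
          div_eq_mul_inv, inv_inv]
        ring
      calc (volume {x ∈ Ω | t/2 ≤ |u x|}).toReal
          ≤ C * (t/2 - t/4) ^ (-m) * (volume {x ∈ Ω | t/4 ≤ |u x|}).toReal ^ γ := hd
        _ ≤ C * (t/2 - t/4) ^ (-m) * V ^ γ := by
            apply mul_le_mul_of_nonneg_left hpow
            have : (0:ℝ) ≤ (t/2 - t/4) ^ (-m) := Real.rpow_nonneg (by linarith) _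
            positivity
        _ = C * 4 ^ m * V ^ γ * t ^ (-m) := by rw [heq, h4]; ring
    have h1 := hdecay (t/2) t (by linarith) (by linarith)
    have heq2 : t - t/2 = t/2 := by ring
    have h2' : (t/2) ^ (-m) = 2 ^ m * t ^ (-m) := by
      rw [Real.div_rpow ht0.le (by norm_num), Real.rpow_neg (by norm_num : (0:ℝ) ≤ 2),
        div_eq_mul_inv, inv_inv]
      ring
    rw [heq2, h2'] at h1
    have hpow2 : (volume {x ∈ Ω | t/2 ≤ |u x|}).toReal ^ γ
        ≤ (C * 4 ^ m * V ^ γ * t ^ (-m)) ^ γ :=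
      Real.rpow_le_rpow ENNReal.toReal_nonneg h2 hγ0.le
    have hmulrpow : (C * 4 ^ m * V ^ γ * t ^ (-m)) ^ γ
        = (C * 4 ^ m * V ^ γ) ^ γ * t ^ (-m * γ) := by
      rw [Real.mul_rpow (by positivity) (Real.rpow_nonneg ht0.le _),
        ← Real.rpow_mul ht0.le]
    have step : C * (2 ^ m * t ^ (-m)) * (volume {x ∈ Ω | t/2 ≤ |u x|}).toReal ^ γ
        ≤ C * (2 ^ m * t ^ (-m)) * ((C * 4 ^ m * V ^ γ) ^ γ * t ^ (-m * γ)) := by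
      apply mul_le_mul_of_nonneg_left _ (by
        have h2m : (0:ℝ) ≤ (2:ℝ) ^ m := Real.rpow_nonneg (by norm_num) m
        have htm : (0:ℝ) ≤ t ^ (-m) := Real.rpow_nonneg ht0.le _
        positivity)
      rw [← hmulrpow]; exact hpow2
    refine h1.trans (step.trans_eq ?_)
    have hte : t ^ (-m) * t ^ (-m * γ) = t ^ (-q) := by
      rw [← Real.rpow_add ht0]
      congr 1
      rw [hqdef]; ring
    calc C * (2 ^ m * t ^ (-m)) * ((C * 4 ^ m * V ^ γ) ^ γ * t ^ (-m * γ))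
        = C * 2 ^ m * (C * 4 ^ m * V ^ γ) ^ γ * (t ^ (-m) * t ^ (-m * γ)) := by ring
      _ = K * t ^ (-q) := by rw [hte, hK]
  -- measurability
  have habs : AEMeasurable (fun x => |u x|) ν := (continuous_abs.measurable.comp_aemeasurable hu)
  have habs_nn : 0 ≤ᵐ[ν] fun x => |u x| := Filter.Eventually.of_forall fun x => abs_nonneg _
  have haesm : AEStronglyMeasurable (fun x => |u x| ^ p) ν :=
    ((measurable_rpow_const' p).comp_aemeasurable habs).aestronglyMeasurable
  refine ⟨haesm, ?_⟩
  rw [hasFiniteIntegral_iff_ofReal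
    (Filter.Eventually.of_forall fun x => Real.rpow_nonneg (abs_nonneg _) _)]
  rw [lintegral_rpow_eq_lintegral_meas_le_mul ν habs_nn habs hp0]
  have hinner : ∫⁻ t in Ioi (0:ℝ), ν {a | t ≤ |u a|} * ENNReal.ofReal (t ^ (p - 1)) < ⊤ := by
    have hsplit : (Ioi (0:ℝ)) = Ioc 0 1 ∪ Ioi 1 := (Ioc_union_Ioi_eq_Ioi zero_le_one).symm
    rw [hsplit, lintegral_union measurableSet_Ioi (Ioc_disjoint_Ioi le_rfl)]
    refine ENNReal.add_lt_top.mpr ⟨?_, ?_⟩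
    · -- on (0, 1]
      have hb : ∀ t ∈ Ioc (0:ℝ) 1,
          ν {a | t ≤ |u a|} * ENNReal.ofReal (t ^ (p - 1)) ≤ volume Ω := by
        intro t htm
        calc ν {a | t ≤ |u a|} * ENNReal.ofReal (t ^ (p - 1))
            ≤ volume Ω * 1 := by
              refine mul_le_mul' ?_ ?_
              · rw [hrest t]; exact measure_mono (hsub t)
              · exact ENNReal.ofReal_le_one.mpr
                  (Real.rpow_le_one htm.1.le htm.2 (by linarith))
          _ = volume Ω := mul_one _
      calc ∫⁻ t in Ioc (0:ℝ) 1, ν {a | t ≤ |u a|} * ENNReal.ofReal (t ^ (p - 1))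
          ≤ ∫⁻ _ in Ioc (0:ℝ) 1, volume Ω := setLIntegral_mono measurable_const hb
        _ = volume Ω * volume (Ioc (0:ℝ) 1) := setLIntegral_const _ _
        _ < ⊤ := by
            rw [Real.volume_Ioc]
            exact ENNReal.mul_lt_top hfin (by norm_num)
    · -- on (1, ∞)
      set s := p - 1 - q with hs
      have hs1 : s < -1 := by rw [hs]; linarith
      have hb : ∀ t ∈ Ioi (1:ℝ),
          ν {a | t ≤ |u a|} * ENNReal.ofReal (t ^ (p - 1))
            ≤ ENNReal.ofReal (K * t ^ s) := by
        intro t htm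
        have ht1 : (1:ℝ) < t := htm
        have ht0 : (0:ℝ) < t := lt_trans one_pos ht1
        have hν1 : ν {a | t ≤ |u a|} ≤ ENNReal.ofReal (K * t ^ (-q)) := by
          rw [hrest t, ← ENNReal.ofReal_toReal (hlt t)]
          exact ENNReal.ofReal_le_ofReal (hkey t ht1.le)
        calc ν {a | t ≤ |u a|} * ENNReal.ofReal (t ^ (p - 1))
            ≤ ENNReal.ofReal (K * t ^ (-q)) * ENNReal.ofReal (t ^ (p - 1)) :=
              mul_le_mul' hν1 le_rfl
          _ = ENNReal.ofReal (K * t ^ (-q) * t ^ (p - 1)) :=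
              (ENNReal.ofReal_mul (by positivity)).symm
          _ = ENNReal.ofReal (K * t ^ s) := by
              rw [mul_assoc, ← Real.rpow_add ht0]
              congr 2
              rw [hs]; ring
      have hint : IntegrableOn (fun t : ℝ => K * t ^ s) (Ioi 1) volume :=
        (integrableOn_Ioi_rpow_of_lt hs1 one_pos).const_mul K
      have hfin' : ∫⁻ t in Ioi (1:ℝ), ENNReal.ofReal (K * t ^ s) < ⊤ := by
        have hnn : 0 ≤ᵐ[volume.restrict (Ioi (1:ℝ))] fun t => K * t ^ s := by
          filter_upwards [ae_restrict_mem measurableSet_Ioi] with t htm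
          have ht0 : (0:ℝ) < t := lt_trans one_pos htm
          positivity
        exact (hasFiniteIntegral_iff_ofReal hnn).mp hint.hasFiniteIntegral
      refine lt_of_le_of_lt ?_ hfin'
      exact setLIntegral_mono
        (ENNReal.measurable_ofReal.comp ((measurable_rpow_const' s).const_mul K)) hb
  exact ENNReal.mul_lt_top ENNReal.ofReal_lt_top hinner
end
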